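/- arXiv:q-bio/0609027 — 10 statements merged into one kernel-verified Lean document; each statement's English description precedes it below -/
import Mathlib

section
/- For every real number b > 0, the section of the joint internal entropy production surface of the negative–negative interaction, h_b(x) = x(f(x) − g(b)) + b(f(b) − g(x)), attains its minimum over [0, ∞) at some point x_b lying strictly inside the interval (0, b); moreover any such minimizer satisfies the criticality equation f(x_b) − g(b) + x_b·f'(x_b) − b·g'(x_b) = 0. In particular the minimizing state satisfies x_b < b, i.e. system y is strictly ahead of system x with respect to thermodynamic equilibrium. -/
open Set Filter

private lemma deriv_nonneg_of_monoOn {φ : ℝ → ℝ} (hφ : Differentiable ℝ φ)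
    (hm : MonotoneOn φ (Set.Ici 0)) {x : ℝ} (hx : 0 ≤ x) : 0 ≤ deriv φ x := by
  have h := (hφ x).hasDerivAt
  rw [hasDerivAt_iff_tendsto_slope] at h
  have h' : Tendsto (slope φ x) (nhdsWithin x (Set.Ioi x)) (nhds (deriv φ x)) :=
    h.mono_left (nhdsWithin_mono x fun y hy => ne_of_gt hy)
  refine ge_of_tendsto h' ?_
  filter_upwards [self_mem_nhdsWithin] with y hy
  have hxy : x < y := hy
  rw [slope_def_field]
  exact div_nonneg (sub_nonneg.2 (hm hx (hx.trans hxy.le) hxy.le)) (sub_nonneg.2 hxy.le)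

theorem nn_section_parallel_SX_min (f g : ℝ → ℝ)
    (hf : ContDiff ℝ 2 f) (hg : ContDiff ℝ 2 g)
    (hf0 : f 0 = 0) (hg0 : g 0 = 0)
    (hfmono : StrictMonoOn f (Set.Ici 0)) (hgmono : StrictMonoOn g (Set.Ici 0))
    (hfg : StrictMonoOn (fun x => f x - g x) (Set.Ici 0))
    (hfg' : MonotoneOn (fun x => deriv f x - deriv g x) (Set.Ici 0))
    (b : ℝ) (hb : 0 < b) :
    (∃ xb ∈ Set.Ioo 0 b,
        IsMinOn (fun x => x * (f x - g b) + b * (f b - g x)) (Set.Ici 0) xb) ∧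
      ∀ xb ∈ Set.Ioo 0 b,
        IsMinOn (fun x => x * (f x - g b) + b * (f b - g x)) (Set.Ici 0) xb →
          f xb - g b + xb * deriv f xb - b * deriv g xb = 0 := by
  set h : ℝ → ℝ := fun x => x * (f x - g b) + b * (f b - g x) with hh
  have hfd : Differentiable ℝ f := hf.differentiable two_ne_zero
  have hgd : Differentiable ℝ g := hg.differentiable two_ne_zero
  have hD : ∀ x, HasDerivAt h (f x - g b + x * deriv f x - b * deriv g x) x := by
    intro x
    have h1 : HasDerivAt (fun y => y * (f y - g b)) (1 * (f x - g b) + x * deriv f x) x :=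
      (hasDerivAt_id x).mul (((hfd x).hasDerivAt).sub_const (g b))
    have h2 : HasDerivAt (fun y => b * (f b - g y)) (b * (0 - deriv g x)) x :=
      ((hasDerivAt_const x (f b)).sub (hgd x).hasDerivAt).const_mul b
    have : HasDerivAt h (1 * (f x - g b) + x * deriv f x + b * (0 - deriv g x)) x := h1.add h2
    convert this using 1
    ring
  have hcont : Continuous h := by
    fun_prop
  -- basic sign facts
  have hgb : 0 < g b := by
    have := hgmono Set.self_mem_Ici (le_of_lt hb) hb
    rwa [hg0] at this
  have hfgb : 0 < f b - g b := by
    have := hfg Set.self_mem_Ici (le_of_lt hb) hb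
    simpa [hf0, hg0] using this
  have hf' : ∀ x : ℝ, 0 ≤ x → 0 ≤ deriv f x :=
    fun x hx => deriv_nonneg_of_monoOn hfd hfmono.monotoneOn hx
  have hg' : ∀ x : ℝ, 0 ≤ x → 0 ≤ deriv g x :=
    fun x hx => deriv_nonneg_of_monoOn hgd hgmono.monotoneOn hx
  have hfg'nonneg : ∀ x : ℝ, 0 ≤ x → 0 ≤ deriv f x - deriv g x := by
    intro x hx
    have hd : Differentiable ℝ (fun y => f y - g y) := hfd.sub hgd
    have := deriv_nonneg_of_monoOn hd hfg.monotoneOn hx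
    rwa [deriv_fun_sub (hfd x) (hgd x)] at this
  have H'0 : f 0 - g b + 0 * deriv f 0 - b * deriv g 0 < 0 := by
    have := hg' 0 le_rfl
    have h1 : 0 ≤ b * deriv g 0 := mul_nonneg hb.le this
    rw [hf0]; nlinarith
  have H'b : 0 < f b - g b + b * deriv f b - b * deriv g b := by
    have h1 : 0 ≤ deriv f b - deriv g b := hfg'nonneg b hb.le
    nlinarith
  -- a point strictly below h 0
  have hlt0 : ∃ y ∈ Set.Ioo 0 b, h y < h 0 := by
    have hs := hasDerivAt_iff_tendsto_slope.mp (hD 0)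
    have hs' : Tendsto (slope h 0) (nhdsWithin 0 (Set.Ioi 0))
        (nhds (f 0 - g b + 0 * deriv f 0 - b * deriv g 0)) :=
      hs.mono_left (nhdsWithin_mono 0 fun y hy => ne_of_gt hy)
    have hev : ∀ᶠ y in nhdsWithin 0 (Set.Ioi 0), slope h 0 y < 0 :=
      hs'.eventually (Filter.Tendsto.eventually_lt_const H'0 tendsto_id) |>.mono (by
        intro y hy; simpa using hy)
    have hmem : Set.Ioo (0:ℝ) b ∈ nhdsWithin 0 (Set.Ioi 0) :=
      Ioo_mem_nhdsGT_of_mem ⟨le_rfl, hb⟩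
    rcases (hev.and (eventually_of_mem hmem fun y hy => hy)).exists with ⟨y, hsy, hy⟩
    refine ⟨y, hy, ?_⟩
    rw [slope_def_field] at hsy
    rcases div_neg_iff.mp hsy with ⟨_, h2⟩ | ⟨h1, _⟩
    · linarith [hy.1]
    · linarith
  -- a point strictly below h b
  have hltb : ∃ y ∈ Set.Ioo 0 b, h y < h b := by
    have hs := hasDerivAt_iff_tendsto_slope.mp (hD b)
    have hs' : Tendsto (slope h b) (nhdsWithin b (Set.Iio b))
        (nhds (f b - g b + b * deriv f b - b * deriv g b)) :=
      hs.mono_left (nhdsWithin_mono b fun y hy => ne_of_lt hy)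
    have hev : ∀ᶠ y in nhdsWithin b (Set.Iio b), 0 < slope h b y :=
      hs'.eventually (Filter.Tendsto.eventually_const_lt H'b tendsto_id) |>.mono (by
        intro y hy; simpa using hy)
    have hmem : Set.Ioo (0:ℝ) b ∈ nhdsWithin b (Set.Iio b) :=
      Ioo_mem_nhdsLT_of_mem ⟨hb, le_rfl⟩
    rcases (hev.and (eventually_of_mem hmem fun y hy => hy)).exists with ⟨y, hsy, hy⟩
    refine ⟨y, hy, ?_⟩
    rw [slope_def_field] at hsy
    rcases div_pos_iff.mp hsy with ⟨_, h2⟩ | ⟨h1, _⟩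
    · linarith [hy.2]
    · linarith
  -- h is monotone on [b, ∞)
  have hmonoIci : MonotoneOn h (Set.Ici b) := by
    apply monotoneOn_of_deriv_nonneg (convex_Ici b) hcont.continuousOn
    · intro x _
      exact ((hD x).differentiableAt).differentiableWithinAt
    · intro x hx
      rw [interior_Ici] at hx
      have hxb : b ≤ x := le_of_lt hx
      have hx0 : (0:ℝ) ≤ x := hb.le.trans hxb
      rw [(hD x).deriv]
      have h1 : f b ≤ f x := hfmono.monotoneOn hb.le hx0 hxb
      have h2 : 0 ≤ deriv f x := hf' x hx0
      have h3 : deriv f b - deriv g b ≤ deriv f x - deriv g x :=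
        hfg' hb.le hx0 hxb
      nlinarith [H'b]
  -- existence of a minimizer on [0, b]
  obtain ⟨c, hcmem, hcmin⟩ :=
    (isCompact_Icc (a := (0:ℝ)) (b := b)).exists_isMinOn
      (Set.nonempty_Icc.mpr hb.le) hcont.continuousOn
  obtain ⟨y0, hy0, hy0lt⟩ := hlt0
  obtain ⟨yb, hyb, hyblt⟩ := hltb
  have hcy0 : h c ≤ h y0 := hcmin ⟨hy0.1.le, hy0.2.le⟩
  have hcyb : h c ≤ h yb := hcmin ⟨hyb.1.le, hyb.2.le⟩
  have hc0 : 0 < c := by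
    rcases lt_or_eq_of_le hcmem.1 with h' | h'
    · exact h'
    · exfalso; rw [← h'] at hcy0; linarith
  have hcb : c < b := by
    rcases lt_or_eq_of_le hcmem.2 with h' | h'
    · exact h'
    · exfalso; rw [h'] at hcyb; linarith
  have hmin : IsMinOn h (Set.Ici 0) c := by
    intro x hx
    rcases le_or_gt x b with hxb | hxb
    · exact hcmin ⟨hx, hxb⟩
    · have h1 : h b ≤ h x := hmonoIci Set.self_mem_Ici hxb.le hxb.le
      have h2 : h c ≤ h b := hcmin ⟨hb.le, le_rfl⟩
      exact le_trans h2 h1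
  constructor
  · exact ⟨c, ⟨hc0, hcb⟩, hmin⟩
  · intro xb hxb hminxb
    have hloc : IsLocalMin h xb := hminxb.isLocalMin (Ici_mem_nhds hxb.1)
    exact hloc.hasDerivAt_eq_zero (hD xb)
end

section
/- For every real number a > 0, the section of the joint internal entropy production surface of the negative–negative interaction taken parallel to the ṠY-plane, k_a(y) = a(f(a) − g(y)) + y(f(y) − g(a)), attains its minimum over [0, ∞) at some point y_a lying strictly inside the interval (0, a); moreover any such minimizer satisfies the criticality equation f(y_a) − g(a) + y_a·f'(y_a) − a·g'(y_a) = 0. In particular y_a < a, i.e. system x is strictly ahead of system y with respect to thermodynamic equilibrium. -/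
open Set Filter Topology

lemma deriv_nonneg_of_monotoneOn_Ici (φ : ℝ → ℝ) (hφ : Differentiable ℝ φ)
    (h : MonotoneOn φ (Set.Ici 0)) {y : ℝ} (hy : 0 ≤ y) : 0 ≤ deriv φ y := by
  have hd : Tendsto (slope φ y) (𝓝[≠] y) (𝓝 (deriv φ y)) :=
    hasDerivAt_iff_tendsto_slope.mp (hφ y).hasDerivAt
  have hd' : Tendsto (slope φ y) (𝓝[>] y) (𝓝 (deriv φ y)) :=
    hd.mono_left (nhdsWithin_mono _ (fun z hz => ne_of_gt hz))
  refine ge_of_tendsto hd' ?_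
  filter_upwards [self_mem_nhdsWithin] with z hz
  have hz' : y < z := hz
  have : φ y ≤ φ z := h hy (le_trans hy hz'.le) hz'.le
  have : 0 ≤ (φ z - φ y) / (z - y) := div_nonneg (by linarith) (by linarith)
  simpa [slope_def_field, div_eq_iff, sub_ne_zero] using this

theorem nn_section_parallel_SY_min (f g : ℝ → ℝ)
    (hf : ContDiff ℝ 2 f) (hg : ContDiff ℝ 2 g)
    (hf0 : f 0 = 0) (hg0 : g 0 = 0)
    (hfmono : StrictMonoOn f (Set.Ici 0)) (hgmono : StrictMonoOn g (Set.Ici 0))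
    (hfg : StrictMonoOn (fun x => f x - g x) (Set.Ici 0))
    (hfg' : MonotoneOn (fun x => deriv f x - deriv g x) (Set.Ici 0))
    (a : ℝ) (ha : 0 < a) :
    (∃ ya ∈ Set.Ioo 0 a,
        IsMinOn (fun y => a * (f a - g y) + y * (f y - g a)) (Set.Ici 0) ya) ∧
      ∀ ya ∈ Set.Ioo 0 a,
        IsMinOn (fun y => a * (f a - g y) + y * (f y - g a)) (Set.Ici 0) ya →
          f ya - g a + ya * deriv f ya - a * deriv g ya = 0 := by
  have hfd : Differentiable ℝ f := hf.differentiable (by norm_num)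
  have hgd : Differentiable ℝ g := hg.differentiable (by norm_num)
  have hf'c : Continuous (deriv f) := hf.continuous_deriv (by norm_num)
  have hg'c : Continuous (deriv g) := hg.continuous_deriv (by norm_num)
  set k : ℝ → ℝ := fun y => a * (f a - g y) + y * (f y - g a) with hkdef
  have hkd : ∀ y, HasDerivAt k (f y - g a + y * deriv f y - a * deriv g y) y := by
    intro y
    have h1 : HasDerivAt (fun y => a * (f a - g y)) (a * -(deriv g y)) y :=
      (((hgd y).hasDerivAt).const_sub (f a)).const_mul a
    have h2 : HasDerivAt (fun y => y * (f y - g a))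
        (1 * (f y - g a) + y * deriv f y) y :=
      (hasDerivAt_id y).mul ((hfd y).hasDerivAt.sub_const (g a))
    have := h1.add h2
    convert this using 1
    case e'_4 => rfl
    case e'_5 => rfl
    case e'_8 => rfl
    case e'_9 => ring
  have hk' : ∀ y, deriv k y = f y - g a + y * deriv f y - a * deriv g y :=
    fun y => (hkd y).deriv
  have hk'c : Continuous (deriv k) := by
    have : Continuous fun y => f y - g a + y * deriv f y - a * deriv g y := by
      exact ((hfd.continuous.sub continuous_const).add
        (continuous_id.mul hf'c)).sub (continuous_const.mul hg'c)
    exact (funext hk' : deriv k = _) ▸ this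
  have hkcont : Continuous k :=
    (continuous_const.mul (continuous_const.sub hgd.continuous)).add
      (continuous_id.mul (hfd.continuous.sub continuous_const))
  -- positivity facts
  have hga : 0 < g a := by
    have := hgmono (self_mem_Ici) (mem_Ici.mpr ha.le) ha
    rwa [hg0] at this
  have hfga : 0 < f a - g a := by
    have := hfg (self_mem_Ici) (mem_Ici.mpr ha.le) ha
    simp only [hf0, hg0, sub_zero] at this
    linarith
  have hg'nn : ∀ y, 0 ≤ y → 0 ≤ deriv g y := fun y hy =>
    deriv_nonneg_of_monotoneOn_Ici g hgd hgmono.monotoneOn hy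
  have hfg'nn : ∀ y, 0 ≤ y → 0 ≤ deriv f y - deriv g y := by
    intro y hy
    have := deriv_nonneg_of_monotoneOn_Ici (fun x => f x - g x) (hfd.sub hgd)
      hfg.monotoneOn hy
    rwa [deriv_fun_sub (hfd y) (hgd y)] at this
  have hk'0 : deriv k 0 < 0 := by
    have h0 := hg'nn 0 le_rfl
    rw [hk' 0, hf0]
    nlinarith
  have hk'pos : ∀ y, a ≤ y → 0 < deriv k y := by
    intro y hy
    have hy0 : 0 ≤ y := le_trans ha.le hy
    have h1 : f a ≤ f y := hfmono.monotoneOn (mem_Ici.mpr ha.le) (mem_Ici.mpr hy0) hy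
    have h2 := hfg'nn y hy0
    have h3 := hg'nn y hy0
    rw [hk' y]
    nlinarith
  -- min on compact [0,a]
  obtain ⟨c, hc, hcmin⟩ := isCompact_Icc.exists_isMinOn (nonempty_Icc.mpr ha.le)
    hkcont.continuousOn
  -- exclude c = 0
  have hc0 : c ≠ 0 := by
    obtain ⟨ε, hε, hball⟩ := Metric.isOpen_iff.mp
      (isOpen_lt hk'c continuous_const : IsOpen {y | deriv k y < 0}) 0 hk'0
    set b := min (ε / 2) (a / 2) with hbdef
    have hb0 : 0 < b := lt_min (by linarith) (by linarith)
    have hba : b ≤ a := le_trans (min_le_right _ _) (by linarith)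
    have hanti : StrictAntiOn k (Icc 0 b) := by
      refine strictAntiOn_of_deriv_neg (convex_Icc 0 b) hkcont.continuousOn ?_
      intro x hx
      rw [interior_Icc] at hx
      refine hball ?_
      have hxb : x < b := hx.2
      have : |x - 0| < ε := by
        rw [abs_sub_lt_iff]
        constructor
        · have : b ≤ ε / 2 := min_le_left _ _
          linarith [hx.1]
        · linarith [hx.1]
      simpa [Metric.mem_ball, Real.dist_eq] using this
    have hlt : k b < k 0 := hanti (left_mem_Icc.mpr hb0.le) ⟨hb0.le, le_rfl⟩ hb0
    intro h0
    have := hcmin (show b ∈ Icc 0 a from ⟨hb0.le, hba⟩)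
    rw [h0] at this
    simp only [Set.mem_setOf_eq] at this
    linarith
  -- exclude c = a
  have hca : c ≠ a := by
    obtain ⟨ε, hε, hball⟩ := Metric.isOpen_iff.mp
      (isOpen_lt continuous_const hk'c : IsOpen {y | 0 < deriv k y}) a (hk'pos a le_rfl)
    set b := max (a / 2) (a - ε / 2) with hbdef
    have hb0 : 0 < b := lt_of_lt_of_le (by linarith) (le_max_left _ _)
    have hba : b < a := max_lt (by linarith) (by linarith)
    have hmono : StrictMonoOn k (Icc b a) := by
      refine strictMonoOn_of_deriv_pos (convex_Icc b a) hkcont.continuousOn ?_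
      intro x hx
      rw [interior_Icc] at hx
      refine hball ?_
      have : |x - a| < ε := by
        rw [abs_sub_lt_iff]
        constructor
        · linarith [hx.2]
        · have : a - ε / 2 ≤ b := le_max_right _ _
          linarith [hx.1]
      simpa [Metric.mem_ball, Real.dist_eq] using this
    have hlt : k b < k a := hmono (left_mem_Icc.mpr hba.le) ⟨hba.le, le_rfl⟩ hba
    intro h0
    have := hcmin (show b ∈ Icc 0 a from ⟨hb0.le, hba.le⟩)
    rw [h0] at this
    simp only [Set.mem_setOf_eq] at this
    linarith
  have hcIoo : c ∈ Ioo 0 a := ⟨lt_of_le_of_ne hc.1 (Ne.symm hc0), lt_of_le_of_ne hc.2 hca⟩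
  -- monotone on [a, ∞)
  have hmonoIci : MonotoneOn k (Ici a) := by
    refine monotoneOn_of_deriv_nonneg (convex_Ici a) hkcont.continuousOn
      (fun x _ => (hkd x).differentiableAt.differentiableWithinAt) ?_
    intro x hx
    rw [interior_Ici] at hx
    exact (hk'pos x (le_of_lt hx)).le
  constructor
  · refine ⟨c, hcIoo, ?_⟩
    rw [isMinOn_iff]
    intro y hy
    rcases le_or_gt y a with hya | hya
    · exact hcmin ⟨hy, hya⟩
    · have h1 : k c ≤ k a := hcmin ⟨ha.le, le_rfl⟩
      have h2 : k a ≤ k y := hmonoIci self_mem_Ici (mem_Ici.mpr hya.le) hya.le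
      exact le_trans h1 h2
  · intro ya hya hmin
    have hloc : IsLocalMin k ya :=
      hmin.isLocalMin (mem_of_superset (Ioi_mem_nhds hya.1) Ioi_subset_Ici_self)
    have := hloc.deriv_eq_zero
    rw [hk' ya] at this
    linarith
end

section
/- St. Matthew inequality for the first trajectory of minimum entropy of the negative–negative interaction: if x ≥ 0 and y > 0 satisfy the trajectory equation f(x) − g(y) + x·f'(x) − y·g'(x) = 0, then 0 < x < y; that is, along the trajectory T₁ system y is always strictly ahead of system x with respect to thermodynamic equilibrium. -/
lemma deriv_nonneg_of_monoOn_s2 {h : ℝ → ℝ} {t : ℝ}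
    (hd : DifferentiableAt ℝ h t) (hm : MonotoneOn h (Set.Ici 0)) (ht : 0 ≤ t) :
    0 ≤ deriv h t := by
  have H : Filter.Tendsto (slope h t) (nhdsWithin t (Set.Ioi t)) (nhds (deriv h t)) :=
    (hasDerivAt_iff_tendsto_slope.1 hd.hasDerivAt).mono_left
      (nhdsWithin_mono t (by intro s hs; exact ne_of_gt hs))
  refine ge_of_tendsto H ?_
  filter_upwards [self_mem_nhdsWithin] with s hs
  have hst : t < s := hs
  have : h t ≤ h s := hm ht (le_trans ht hst.le) hst.le
  have : 0 ≤ h s - h t := by linarith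
  unfold slope
  simp only [smul_eq_mul, vsub_eq_sub]
  have hst' : 0 < s - t := by linarith
  positivity

theorem nn_T1_st_matthew (f g : ℝ → ℝ)
    (hf : ContDiff ℝ 2 f) (hg : ContDiff ℝ 2 g)
    (hf0 : f 0 = 0) (hg0 : g 0 = 0)
    (hfmono : StrictMonoOn f (Set.Ici 0)) (hgmono : StrictMonoOn g (Set.Ici 0))
    (hfg : StrictMonoOn (fun x => f x - g x) (Set.Ici 0))
    (hfg' : MonotoneOn (fun x => deriv f x - deriv g x) (Set.Ici 0))
    (x y : ℝ) (hx : 0 ≤ x) (hy : 0 < y)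
    (htraj : f x - g y + x * deriv f x - y * deriv g x = 0) :
    0 < x ∧ x < y := by
  have hdf : Differentiable ℝ f := hf.differentiable (by norm_num)
  have hdg : Differentiable ℝ g := hg.differentiable (by norm_num)
  have hgx : 0 ≤ deriv g x :=
    deriv_nonneg_of_monoOn_s2 (hdg x) hgmono.monotoneOn hx
  have hfgx : 0 ≤ deriv f x - deriv g x := by
    have hφ : ∀ t : ℝ, deriv (fun s => f s - g s) t = deriv f t - deriv g t := fun t =>
      deriv_sub (hdf t) (hdg t)
    have := deriv_nonneg_of_monoOn_s2 (t := x)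
      ((hdf x).sub (hdg x)) hfg.monotoneOn hx
    rwa [show (f - g) = (fun s => f s - g s) from rfl, hφ x] at this
  have hx0 : 0 < x := by
    rcases hx.lt_or_eq with h | h
    · exact h
    · exfalso
      have hgy : 0 < g y := by
        have := hgmono (Set.mem_Ici.2 (le_refl 0)) hy.le hy
        rwa [hg0] at this
      have hg0' : 0 ≤ deriv g 0 :=
        deriv_nonneg_of_monoOn_s2 (hdg 0) hgmono.monotoneOn le_rfl
      rw [← h] at htraj
      rw [hf0] at htraj
      nlinarith
  refine ⟨hx0, ?_⟩
  by_contra hxy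
  push_neg at hxy
  have h1 : g y ≤ g x := hgmono.monotoneOn hy.le hx hxy
  have h2 : 0 < f x - g x := by
    have := hfg (Set.mem_Ici.2 (le_refl 0)) hx hx0
    simp only [hf0, hg0] at this
    linarith
  have h3 : y * deriv g x ≤ x * deriv g x := by nlinarith
  have h4 : 0 ≤ x * (deriv f x - deriv g x) := by positivity
  nlinarith
end

section
/- The bisector y = x is a trajectory of minimum entropy of the negative–negative interaction: for every c > 0, if f'(c/2) + g'(c/2) > 0, then x = c/2 is a strict local minimum of the section h(x) = x(f(x) − g(c − x)) + (c − x)(f(c − x) − g(x)) of the joint internal entropy production surface by the plane y = c − x. -/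
theorem nn_bisector_is_tme (f g : ℝ → ℝ)
    (hf : ContDiff ℝ 2 f) (hg : ContDiff ℝ 2 g)
    (hf0 : f 0 = 0) (hg0 : g 0 = 0)
    (hfmono : StrictMonoOn f (Set.Ici 0)) (hgmono : StrictMonoOn g (Set.Ici 0))
    (hfg : StrictMonoOn (fun x => f x - g x) (Set.Ici 0))
    (hfg' : MonotoneOn (fun x => deriv f x - deriv g x) (Set.Ici 0))
    (c : ℝ) (hc : 0 < c)
    (hpos : 0 < deriv f (c / 2) + deriv g (c / 2)) :
    ∃ ε > 0, ∀ x : ℝ, |x - c / 2| < ε → x ≠ c / 2 →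
      (fun x => x * (f x - g (c - x)) + (c - x) * (f (c - x) - g x)) (c / 2) <
        (fun x => x * (f x - g (c - x)) + (c - x) * (f (c - x) - g x)) x := by
  have hfd : Differentiable ℝ f := hf.differentiable (by norm_num)
  have hgd : Differentiable ℝ g := hg.differentiable (by norm_num)
  have hFd : Differentiable ℝ (fun x => f x - g x) := hfd.sub hgd
  have hF'mono : MonotoneOn (deriv (fun x => f x - g x)) (Set.Ici 0) := by
    intro a ha b hb hab
    rw [deriv_fun_sub (hfd a) (hgd a), deriv_fun_sub (hfd b) (hgd b)]
    exact hfg' ha hb hab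
  have hconv : ConvexOn ℝ (Set.Ici 0) (fun x => f x - g x) :=
    MonotoneOn.convexOn_of_deriv (convex_Ici 0) hFd.continuous.continuousOn
      hFd.differentiableOn (hF'mono.mono interior_subset)
  have hm0 : (0:ℝ) < c / 2 := by positivity
  have key : ∀ a : ℝ, c / 2 < a → a < c →
      (c/2) * (f (c/2) - g (c - c/2)) + (c - c/2) * (f (c - c/2) - g (c/2)) <
      a * (f a - g (c - a)) + (c - a) * (f (c - a) - g a) := by
    intro a hma hac
    have hb0 : (0:ℝ) ≤ c - a := by linarith
    have ha0 : (0:ℝ) ≤ a := by linarith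
    have hbm : c - a < c / 2 := by linarith
    have hab : c - a < a := by linarith
    have hmmem : c / 2 ∈ Set.Ici (0:ℝ) := le_of_lt hm0
    have hamem : a ∈ Set.Ici (0:ℝ) := ha0
    have hbmem : c - a ∈ Set.Ici (0:ℝ) := hb0
    have hmid := hconv.2 hamem hbmem (by norm_num : (0:ℝ) ≤ 1/2)
      (by norm_num : (0:ℝ) ≤ 1/2) (by norm_num : (1:ℝ)/2 + 1/2 = 1)
    simp only [smul_eq_mul] at hmid
    rw [show (1:ℝ)/2 * a + 1/2 * (c - a) = c/2 by ring] at hmid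
    have h1 : (f (c/2) - g (c/2)) - (f (c-a) - g (c-a)) ≤
        (f a - g a) - (f (c/2) - g (c/2)) := by linarith
    have h2 : f (c-a) - g (c-a) < f (c/2) - g (c/2) := hfg hbmem hmmem hbm
    have h3 : g (c-a) < g a := hgmono hbmem hamem hab
    have P1 : a * ((f (c/2) - g (c/2)) - (f (c-a) - g (c-a))) ≤
        a * ((f a - g a) - (f (c/2) - g (c/2))) := mul_le_mul_of_nonneg_left h1 ha0
    have P3 : 0 ≤ (a - (c-a)) * ((f (c/2) - g (c/2)) - (f (c-a) - g (c-a))) :=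
      mul_nonneg (by linarith) (by linarith)
    have P4 : 0 < (a - (c-a)) * (g a - g (c-a)) := mul_pos (by linarith) (by linarith)
    rw [show c - c/2 = c/2 by ring]
    nlinarith [P1, P3, P4]
  refine ⟨c/2, hm0, fun x hx hxne => ?_⟩
  simp only []
  rw [abs_lt] at hx
  rcases lt_or_gt_of_ne hxne with hlt | hgt
  · have h := key (c - x) (by linarith) (by linarith)
    rw [show c - (c - x) = x by ring] at h
    linarith [h]
  · exact key x hgt (by linarith)
end

section
/- Existence of a trajectory of minimum entropy T₁ for the positive–negative interaction: if g(x) < x·g'(0) for every x > 0, then for every b > 0 the section h_b(x) = x(f(x) + g(b)) + b(f(b) − g(x)) of the joint internal entropy production surface attains its minimum over [0, ∞) at some point x_b lying strictly inside (0, b), and any such minimizer satisfies f(x_b) + g(b) + x_b·f'(x_b) − b·g'(x_b) = 0. -/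
open Set Filter Topology

/-- If a function is monotone on `Ici 0` and differentiable at a point `x ≥ 0`,
its derivative there is nonnegative. -/
lemma aux_deriv_nonneg_of_monotoneOn {φ : ℝ → ℝ} {x : ℝ} (hx : 0 ≤ x)
    (hd : DifferentiableAt ℝ φ x) (hm : MonotoneOn φ (Set.Ici 0)) :
    0 ≤ deriv φ x := by
  have hs := hasDerivAt_iff_tendsto_slope.mp hd.hasDerivAt
  have hs' : Tendsto (slope φ x) (𝓝[>] x) (𝓝 (deriv φ x)) :=
    hs.mono_left (nhdsWithin_mono _ (fun y (hy : _ < y) => Set.mem_compl_singleton_iff.mpr (ne_of_gt hy)))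
  refine ge_of_tendsto hs' ?_
  filter_upwards [self_mem_nhdsWithin] with y hy
  rw [slope_def_field]
  exact div_nonneg (sub_nonneg.2 (hm hx (hx.trans (le_of_lt hy)) (le_of_lt hy)))
    (sub_nonneg.2 (le_of_lt hy))

/-- If the derivative at `a` is negative, there is a point just to the right
where the function value is smaller. -/
lemma aux_right_lt {φ : ℝ → ℝ} {a d : ℝ} (h : HasDerivAt φ d a) (hd : d < 0) :
    ∀ᶠ x in 𝓝[>] a, φ x < φ a := by
  have hs := hasDerivAt_iff_tendsto_slope.mp h
  have hs' : Tendsto (slope φ a) (𝓝[>] a) (𝓝 d) :=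
    hs.mono_left (nhdsWithin_mono _ (fun y (hy : _ < y) => Set.mem_compl_singleton_iff.mpr (ne_of_gt hy)))
  filter_upwards [hs'.eventually_lt_const hd, self_mem_nhdsWithin] with x hx hxa
  rw [slope_def_field] at hx
  have hpos : 0 < x - a := sub_pos.2 hxa
  have := (div_neg_iff).mp hx
  rcases this with ⟨_, h2⟩ | ⟨h1, _⟩
  · linarith
  · linarith

/-- If the derivative at `a` is positive, there is a point just to the left
where the function value is smaller. -/
lemma aux_left_lt {φ : ℝ → ℝ} {a d : ℝ} (h : HasDerivAt φ d a) (hd : 0 < d) :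
    ∀ᶠ x in 𝓝[<] a, φ x < φ a := by
  have hs := hasDerivAt_iff_tendsto_slope.mp h
  have hs' : Tendsto (slope φ a) (𝓝[<] a) (𝓝 d) :=
    hs.mono_left (nhdsWithin_mono _ (fun y (hy : y < _) => Set.mem_compl_singleton_iff.mpr (ne_of_lt hy)))
  filter_upwards [hs'.eventually_const_lt hd, self_mem_nhdsWithin] with x hx hxa
  rw [slope_def_field] at hx
  have hneg : x - a < 0 := sub_neg.2 hxa
  have := (div_pos_iff).mp hx
  rcases this with ⟨h1, h2⟩ | ⟨h1, _⟩
  · linarith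
  · linarith

theorem pn_T1_exists (f g : ℝ → ℝ)
    (hf : ContDiff ℝ 2 f) (hg : ContDiff ℝ 2 g)
    (hf0 : f 0 = 0) (hg0 : g 0 = 0)
    (hfmono : StrictMonoOn f (Set.Ici 0)) (hgmono : StrictMonoOn g (Set.Ici 0))
    (hfg : StrictMonoOn (fun x => f x - g x) (Set.Ici 0))
    (hfg' : MonotoneOn (fun x => deriv f x - deriv g x) (Set.Ici 0))
    (hg1 : ∀ x : ℝ, 0 < x → g x < x * deriv g 0)
    (b : ℝ) (hb : 0 < b) :
    (∃ xb ∈ Set.Ioo 0 b,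
        IsMinOn (fun x => x * (f x + g b) + b * (f b - g x)) (Set.Ici 0) xb) ∧
      ∀ xb ∈ Set.Ioo 0 b,
        IsMinOn (fun x => x * (f x + g b) + b * (f b - g x)) (Set.Ici 0) xb →
          f xb + g b + xb * deriv f xb - b * deriv g xb = 0 := by
  set H : ℝ → ℝ := fun x => x * (f x + g b) + b * (f b - g x) with hH
  have hfd : Differentiable ℝ f := hf.differentiable two_ne_zero
  have hgd : Differentiable ℝ g := hg.differentiable two_ne_zero
  -- derivative of H
  have hder : ∀ x : ℝ, HasDerivAt H (f x + g b + x * deriv f x - b * deriv g x) x := by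
    intro x
    have h1 : HasDerivAt (fun x => x * (f x + g b)) (1 * (f x + g b) + x * deriv f x) x :=
      (hasDerivAt_id x).mul ((hfd x).hasDerivAt.add_const (g b))
    have h2 : HasDerivAt (fun x => b * (f b - g x)) (b * (0 - deriv g x)) x :=
      ((hasDerivAt_const x (f b)).sub (hgd x).hasDerivAt).const_mul b
    have h3 := h1.add h2
    exact h3.congr_deriv (by ring)
  have Hcont : Continuous H := by
    fun_prop
  -- derivative of g is nonneg on Ici 0, and f' - g' nonneg on Ici 0
  have hg'nn : ∀ x : ℝ, 0 ≤ x → 0 ≤ deriv g x := fun x hx =>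
    aux_deriv_nonneg_of_monotoneOn hx (hgd x) hgmono.monotoneOn
  have hfg'nn : ∀ x : ℝ, 0 ≤ x → deriv g x ≤ deriv f x := by
    intro x hx
    have hd : DifferentiableAt ℝ (fun x => f x - g x) x := (hfd x).sub (hgd x)
    have := aux_deriv_nonneg_of_monotoneOn hx hd hfg.monotoneOn
    rw [deriv_fun_sub (hfd x) (hgd x)] at this
    linarith
  have hfbpos : 0 < f b := by
    have := hfmono (Set.self_mem_Ici) (Set.mem_Ici.2 hb.le) hb
    rwa [hf0] at this
  have hgbpos : 0 < g b := by
    have := hgmono (Set.self_mem_Ici) (Set.mem_Ici.2 hb.le) hb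
    rwa [hg0] at this
  -- derivative of H is positive on [b, ∞)
  have hder_pos : ∀ x : ℝ, b ≤ x → 0 < f x + g b + x * deriv f x - b * deriv g x := by
    intro x hx
    have hx0 : (0:ℝ) ≤ x := hb.le.trans hx
    have hfx : f b ≤ f x := hfmono.monotoneOn (Set.mem_Ici.2 hb.le) (Set.mem_Ici.2 hx0) hx
    have h1 : b * deriv g x ≤ x * deriv g x := mul_le_mul_of_nonneg_right hx (hg'nn x hx0)
    have h2 : x * deriv g x ≤ x * deriv f x := mul_le_mul_of_nonneg_left (hfg'nn x hx0) hx0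
    linarith
  -- H is monotone on [b, ∞)
  have Hmono : StrictMonoOn H (Set.Ici b) := by
    apply strictMonoOn_of_deriv_pos (convex_Ici b) Hcont.continuousOn
    intro x hx
    rw [interior_Ici] at hx
    rw [(hder x).deriv]
    exact hder_pos x (le_of_lt hx)
  -- existence of minimizer on [0, b]
  obtain ⟨c, hc_mem, hc_min⟩ :=
    isCompact_Icc.exists_isMinOn (Set.nonempty_Icc.2 hb.le) Hcont.continuousOn
  -- c is a min on all of Ici 0
  have hc0b : c ∈ Set.Icc 0 b := hc_mem
  have hc_min' : IsMinOn H (Set.Ici 0) c := by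
    intro x hx
    simp only [Set.mem_Ici] at hx
    rcases le_or_gt x b with hxb | hxb
    · exact hc_min (Set.mem_Icc.2 ⟨hx, hxb⟩)
    · have h1 : H c ≤ H b := hc_min (Set.right_mem_Icc.2 hb.le)
      have h2 : H b ≤ H x := (Hmono.monotoneOn Set.self_mem_Ici (Set.mem_Ici.2 hxb.le) hxb.le)
      exact le_trans h1 h2
  -- there is a point in (0,b) with H x < H 0
  have hd0 : HasDerivAt H (g b - b * deriv g 0) 0 := by
    have := hder 0
    rw [hf0] at this
    convert this using 1
    ring
  have hd0neg : g b - b * deriv g 0 < 0 := by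
    have := hg1 b hb
    linarith
  have hex0 : ∃ x ∈ Set.Ioo 0 b, H x < H 0 := by
    have h1 : Set.Ioo (0:ℝ) b ∈ 𝓝[>] (0:ℝ) := Ioo_mem_nhdsGT_of_mem ⟨le_refl 0, hb⟩
    have h2 := (aux_right_lt hd0 hd0neg).and (eventually_of_mem h1 (fun x hx => hx))
    obtain ⟨x, hx1, hx2⟩ := h2.exists
    exact ⟨x, hx2, hx1⟩
  -- there is a point in (0,b) with H x < H b
  have hexb : ∃ x ∈ Set.Ioo 0 b, H x < H b := by
    have hdb := hder b
    have hdbpos := hder_pos b le_rfl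
    have h1 : Set.Ioo (0:ℝ) b ∈ 𝓝[<] b := Ioo_mem_nhdsLT_of_mem ⟨hb, le_refl b⟩
    have h2 := (aux_left_lt hdb hdbpos).and (eventually_of_mem h1 (fun x hx => hx))
    obtain ⟨x, hx1, hx2⟩ := h2.exists
    exact ⟨x, hx2, hx1⟩
  have hcne0 : c ≠ 0 := by
    rintro rfl
    obtain ⟨x, hx, hlt⟩ := hex0
    exact absurd (hc_min' (Set.mem_Ici.2 hx.1.le)) (not_le.2 hlt)
  have hcneb : c ≠ b := by
    rintro rfl
    obtain ⟨x, hx, hlt⟩ := hexb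
    exact absurd (hc_min' (Set.mem_Ici.2 hx.1.le)) (not_le.2 hlt)
  have hcIoo : c ∈ Set.Ioo 0 b :=
    ⟨lt_of_le_of_ne hc0b.1 (Ne.symm hcne0), lt_of_le_of_ne hc0b.2 hcneb⟩
  refine ⟨⟨c, hcIoo, hc_min'⟩, ?_⟩
  intro xb hxb hmin
  have hloc : IsLocalMin H xb := hmin.isLocalMin (Ici_mem_nhds hxb.1)
  exact hloc.hasDerivAt_eq_zero (hder xb)
end

section
/- Existence of a trajectory of minimum entropy T₂ for the positive–negative interaction: if x·g'(0) < g(x) for every x > 0, then for every a > 0 the section h_a(y) = a(f(a) + g(y)) + y(f(y) − g(a)) of the joint internal entropy production surface attains its minimum over [0, ∞) at some point y_a lying strictly inside (0, a), and any such minimizer satisfies f(y_a) − g(a) + y_a·f'(y_a) + a·g'(y_a) = 0. -/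
theorem pn_T2_exists (f g : ℝ → ℝ)
    (hf : ContDiff ℝ 2 f) (hg : ContDiff ℝ 2 g)
    (hf0 : f 0 = 0) (hg0 : g 0 = 0)
    (hfmono : StrictMonoOn f (Set.Ici 0)) (hgmono : StrictMonoOn g (Set.Ici 0))
    (hfg : StrictMonoOn (fun x => f x - g x) (Set.Ici 0))
    (hfg' : MonotoneOn (fun x => deriv f x - deriv g x) (Set.Ici 0))
    (hg2 : ∀ x : ℝ, 0 < x → x * deriv g 0 < g x)
    (a : ℝ) (ha : 0 < a) :
    (∃ ya ∈ Set.Ioo 0 a,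
        IsMinOn (fun y => a * (f a + g y) + y * (f y - g a)) (Set.Ici 0) ya) ∧
      ∀ ya ∈ Set.Ioo 0 a,
        IsMinOn (fun y => a * (f a + g y) + y * (f y - g a)) (Set.Ici 0) ya →
          f ya - g a + ya * deriv f ya + a * deriv g ya = 0 := by
  have hfd : Differentiable ℝ f := hf.differentiable (by norm_num)
  have hgd : Differentiable ℝ g := hg.differentiable (by norm_num)
  set h : ℝ → ℝ := fun y => a * (f a + g y) + y * (f y - g a) with hhdef
  have hder : ∀ y, HasDerivAt h (a * deriv g y + (f y - g a + y * deriv f y)) y := by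
    intro y
    have h1 : HasDerivAt (fun y : ℝ => a * (f a + g y)) (a * deriv g y) y :=
      (((hgd y).hasDerivAt.const_add (f a)).const_mul a)
    have h2 : HasDerivAt (fun y : ℝ => y * (f y - g a)) (f y - g a + y * deriv f y) y := by
      have := (hasDerivAt_id' y).mul ((hfd y).hasDerivAt.sub_const (g a))
      exact this.congr_deriv (by simp)
    exact h1.add h2
  have hcont : Continuous h :=
    (continuous_const.mul (continuous_const.add hgd.continuous)).add
      (continuous_id.mul (hfd.continuous.sub continuous_const))
  -- a key positivity fact
  have hfga : 0 < f a - g a := by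
    have := hfg (Set.self_mem_Ici) (Set.mem_Ici.2 ha.le) ha
    simpa [hf0, hg0] using this
  -- one-sided slope lemmas
  have keyR : ∀ (F : ℝ → ℝ) (x d : ℝ), HasDerivAt F d x →
      (∀ y, x < y → F x ≤ F y) → 0 ≤ d := by
    intro F x d hd hm
    have ht : Filter.Tendsto (slope F x) (nhdsWithin x (Set.Ioi x)) (nhds d) :=
      (hasDerivAt_iff_tendsto_slope.1 hd).mono_left
        (nhdsWithin_mono x (fun y hy => ne_of_gt hy))
    refine ge_of_tendsto ht ?_
    filter_upwards [self_mem_nhdsWithin] with y hy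
    have hy' : x < y := hy
    have h1 := hm y hy'
    have hpos : 0 < y - x := by linarith
    have : (0:ℝ) ≤ (F y - F x) / (y - x) := div_nonneg (by linarith) hpos.le
    simpa [slope_def_field] using this
  have keyL : ∀ (F : ℝ → ℝ) (x d : ℝ), 0 < x → HasDerivAt F d x →
      (∀ y, 0 ≤ y → y < x → F x ≤ F y) → d ≤ 0 := by
    intro F x d hx hd hm
    have ht : Filter.Tendsto (slope F x) (nhdsWithin x (Set.Iio x)) (nhds d) :=
      (hasDerivAt_iff_tendsto_slope.1 hd).mono_left
        (nhdsWithin_mono x (fun y hy => ne_of_lt hy))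
    refine le_of_tendsto ht ?_
    have hIoo : Set.Ioo 0 x ∈ nhdsWithin x (Set.Iio x) :=
      Ioo_mem_nhdsLT_of_mem ⟨hx, le_refl x⟩
    filter_upwards [hIoo] with y hy
    have h1 : F x ≤ F y := hm y hy.1.le hy.2
    have h2 : 0 ≤ F y - F x := by linarith
    have h3 : y - x < 0 := by linarith [hy.2]
    have : (F y - F x) / (y - x) ≤ 0 := div_nonpos_of_nonneg_of_nonpos h2 h3.le
    simpa [slope_def_field] using this
  -- min on [0,a]
  obtain ⟨c, hc, hcmin⟩ := (isCompact_Icc (a := (0:ℝ)) (b := a)).exists_isMinOn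
    ⟨0, Set.left_mem_Icc.2 ha.le⟩ hcont.continuousOn
  -- tail estimate
  have htail : ∀ y, a ≤ y → h a ≤ h y := by
    intro y hy
    have hga : g a ≤ g y := hgmono.monotoneOn (Set.mem_Ici.2 ha.le)
      (Set.mem_Ici.2 (ha.le.trans hy)) hy
    have hfa : f a ≤ f y := hfmono.monotoneOn (Set.mem_Ici.2 ha.le)
      (Set.mem_Ici.2 (ha.le.trans hy)) hy
    simp only [hhdef]
    nlinarith [mul_le_mul_of_nonneg_left hga ha.le,
      mul_le_mul_of_nonneg_left hfa (ha.le.trans hy)]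
  have hminIci : IsMinOn h (Set.Ici 0) c := by
    intro y hy
    by_cases hya : y ≤ a
    · exact hcmin ⟨hy, hya⟩
    · have h1 : h c ≤ h a := hcmin (Set.right_mem_Icc.2 ha.le)
      have h2 : h a ≤ h y := htail y (le_of_not_ge hya)
      exact le_trans h1 h2
  -- c ≠ 0
  have hc0 : c ≠ 0 := by
    intro hc0
    have hd0 : HasDerivAt h (a * deriv g 0 + (f 0 - g a + 0 * deriv f 0)) 0 := hder 0
    have hnn : 0 ≤ a * deriv g 0 + (f 0 - g a + 0 * deriv f 0) := by
      refine keyR h 0 _ hd0 ?_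
      intro y hy
      have := hminIci (Set.mem_Ici.2 hy.le)
      rwa [hc0] at this
    have := hg2 a ha
    simp only [hf0, zero_mul, add_zero] at hnn
    linarith
  -- derivatives of monotone functions are nonneg at a
  have hf'a : 0 ≤ deriv f a := by
    refine keyR f a _ (hfd a).hasDerivAt ?_
    intro y hy
    exact (hfmono (Set.mem_Ici.2 ha.le) (Set.mem_Ici.2 (ha.le.trans hy.le)) hy).le
  have hg'a : 0 ≤ deriv g a := by
    refine keyR g a _ (hgd a).hasDerivAt ?_
    intro y hy
    exact (hgmono (Set.mem_Ici.2 ha.le) (Set.mem_Ici.2 (ha.le.trans hy.le)) hy).le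
  -- c ≠ a
  have hca : c ≠ a := by
    intro hca
    have hnp : a * deriv g a + (f a - g a + a * deriv f a) ≤ 0 := by
      refine keyL h a _ ha (hder a) ?_
      intro y hy0 hya
      have := hminIci (Set.mem_Ici.2 hy0)
      rwa [hca] at this
    nlinarith
  have hcIoo : c ∈ Set.Ioo 0 a := ⟨lt_of_le_of_ne hc.1 (Ne.symm hc0), lt_of_le_of_ne hc.2 hca⟩
  refine ⟨⟨c, hcIoo, hminIci⟩, ?_⟩
  intro ya hya hmin
  have hloc : IsLocalMin h ya := hmin.isLocalMin (Ici_mem_nhds hya.1)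
  have := hloc.hasDerivAt_eq_zero (hder ya)
  linarith
end

section
/- St. Matthew inequality for the trajectory T₁ of the positive–negative interaction: if x ≥ 0 and y > 0 satisfy the trajectory equation f(x) + g(y) + x·f'(x) − y·g'(x) = 0, then x < y; that is, along this trajectory of minimum entropy system y is always strictly ahead of system x with respect to thermodynamic equilibrium. -/
lemma aux_deriv_nonneg (φ : ℝ → ℝ) (hm : MonotoneOn φ (Set.Ici 0))
    (x : ℝ) (hx : 0 < x) (hd : DifferentiableAt ℝ φ x) : 0 ≤ deriv φ x := by
  have h := hd.hasDerivAt
  rw [hasDerivAt_iff_tendsto_slope] at h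
  refine ge_of_tendsto h ?_
  have hmem : Set.Ioi (0:ℝ) ∈ nhdsWithin x {x}ᶜ :=
    nhdsWithin_le_nhds (Ioi_mem_nhds hx)
  filter_upwards [hmem, self_mem_nhdsWithin] with t ht htne
  have htne' : t ≠ x := htne
  rw [slope_def_field]
  rcases lt_or_gt_of_ne htne' with hlt | hgt
  · have h1 : φ t ≤ φ x := hm (Set.mem_Ici.mpr (le_of_lt ht)) (Set.mem_Ici.mpr (le_of_lt (lt_trans ht hlt))) (le_of_lt hlt)
    have h2 : t - x < 0 := by linarith
    exact div_nonneg_iff.mpr (Or.inr ⟨by linarith, h2.le⟩)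
  · apply div_nonneg
    · simpa using hm (le_of_lt hx) (le_of_lt (lt_trans hx hgt)) (le_of_lt hgt)
    · linarith

theorem pn_T1_st_matthew (f g : ℝ → ℝ)
    (hf : ContDiff ℝ 2 f) (hg : ContDiff ℝ 2 g)
    (hf0 : f 0 = 0) (hg0 : g 0 = 0)
    (hfmono : StrictMonoOn f (Set.Ici 0)) (hgmono : StrictMonoOn g (Set.Ici 0))
    (hfg : StrictMonoOn (fun x => f x - g x) (Set.Ici 0))
    (hfg' : MonotoneOn (fun x => deriv f x - deriv g x) (Set.Ici 0))
    (x y : ℝ) (hx : 0 ≤ x) (hy : 0 < y)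
    (htraj : f x + g y + x * deriv f x - y * deriv g x = 0) :
    x < y := by
  by_contra hcon
  push_neg at hcon
  have hxpos : 0 < x := lt_of_lt_of_le hy hcon
  have hdf : Differentiable ℝ f := hf.differentiable (by norm_num)
  have hdg : Differentiable ℝ g := hg.differentiable (by norm_num)
  -- g y > 0
  have hgy : 0 < g y := by
    have := hgmono (Set.mem_Ici.mpr le_rfl) (Set.mem_Ici.mpr hy.le) hy
    rwa [hg0] at this
  have hfx : 0 < f x := by
    have := hfmono (Set.mem_Ici.mpr le_rfl) (Set.mem_Ici.mpr hxpos.le) hxpos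
    rwa [hf0] at this
  -- deriv g x ≥ 0
  have hg' : 0 ≤ deriv g x :=
    aux_deriv_nonneg g (hgmono.monotoneOn) x hxpos (hdg x)
  -- deriv f x ≥ deriv g x
  have hfg'' : deriv g x ≤ deriv f x := by
    have hd : 0 ≤ deriv (fun t => f t - g t) x :=
      aux_deriv_nonneg _ (hfg.monotoneOn) x hxpos ((hdf x).sub (hdg x))
    rw [deriv_fun_sub (hdf x) (hdg x)] at hd
    linarith
  have h1 : y * deriv g x ≤ x * deriv g x := by nlinarith
  have h2 : x * deriv g x ≤ x * deriv f x := by nlinarith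
  linarith
end

section
/- St. Matthew inequality for the trajectory T₂ of the positive–negative interaction: if x ≥ 0, y ≥ 0 with (x, y) ≠ (0, 0) satisfy the trajectory equation f(y) − g(x) + y·f'(y) + x·g'(y) = 0, then y < x; that is, along this trajectory of minimum entropy system x is always strictly ahead of system y with respect to thermodynamic equilibrium. -/
open Filter Topology

lemma deriv_nonneg_of_monotoneOn_Ici_s11 {f : ℝ → ℝ} {y : ℝ}
    (hd : DifferentiableAt ℝ f y) (hm : MonotoneOn f (Set.Ici 0)) (hy : 0 < y) :
    0 ≤ deriv f y := by
  have h := hd.hasDerivAt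
  rw [hasDerivAt_iff_tendsto_slope] at h
  have hle : 𝓝[>] y ≤ 𝓝[≠] y :=
    nhdsWithin_mono y (fun z hz => ne_of_gt hz)
  have h' : Filter.Tendsto (slope f y) (𝓝[>] y) (𝓝 (deriv f y)) := h.mono_left hle
  refine ge_of_tendsto h' ?_
  filter_upwards [self_mem_nhdsWithin] with z hz
  have hz' : y < z := hz
  have h1 : f y ≤ f z := hm (le_of_lt hy) (le_of_lt (hy.trans hz')) hz'.le
  have : slope f y z = (f z - f y) / (z - y) := by
    simp [slope_def_field, div_eq_div_iff]
  rw [this]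
  exact div_nonneg (by linarith) (by linarith)

theorem pn_T2_st_matthew (f g : ℝ → ℝ)
    (hf : ContDiff ℝ 2 f) (hg : ContDiff ℝ 2 g)
    (hf0 : f 0 = 0) (hg0 : g 0 = 0)
    (hfmono : StrictMonoOn f (Set.Ici 0)) (hgmono : StrictMonoOn g (Set.Ici 0))
    (hfg : StrictMonoOn (fun x => f x - g x) (Set.Ici 0))
    (hfg' : MonotoneOn (fun x => deriv f x - deriv g x) (Set.Ici 0))
    (x y : ℝ) (hx : 0 ≤ x) (hy : 0 ≤ y) (hxy : (x, y) ≠ (0, 0))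
    (htraj : f y - g x + y * deriv f y + x * deriv g y = 0) :
    y < x := by
  by_contra hcon
  push_neg at hcon
  -- hcon : x ≤ y
  have hy0 : 0 < y := by
    rcases hy.lt_or_eq with h | h
    · exact h
    · exfalso; apply hxy
      have hx0 : x = 0 := le_antisymm (by linarith) hx
      simp [hx0, ← h]
  have hgxy : g x ≤ g y := (hgmono.monotoneOn) hx hy hcon
  have hfgy : 0 < f y - g y := by
    have := hfg (Set.self_mem_Ici) (Set.mem_Ici.mpr hy) hy0
    simpa [hf0, hg0] using this
  have hdf : DifferentiableAt ℝ f y := (hf.differentiable two_ne_zero) y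
  have hdg : DifferentiableAt ℝ g y := (hg.differentiable two_ne_zero) y
  have h1 : 0 ≤ deriv f y := deriv_nonneg_of_monotoneOn_Ici_s11 hdf hfmono.monotoneOn hy0
  have h2 : 0 ≤ deriv g y := deriv_nonneg_of_monotoneOn_Ici_s11 hdg hgmono.monotoneOn hy0
  have t1 : 0 ≤ y * deriv f y := mul_nonneg hy h1
  have t2 : 0 ≤ x * deriv g y := mul_nonneg hx h2
  linarith
end

section
/- For every real number c > 0, the second derivative at x = c/2 of the section h(x) = x(f(x) + g(c − x)) + (c − x)(f(c − x) − g(x)) of the positive–negative interaction surface by the plane y = c − x equals h''(c/2) = 4·f'(c/2) + c·f''(c/2); consequently, if g(c/2) = (c/2)·g'(c/2) and 4·f'(c/2) + c·f''(c/2) > 0, then x = c/2 is a strict local minimum of this section. -/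
theorem pn_transversal_second_deriv (f g : ℝ → ℝ)
    (hf : ContDiff ℝ 2 f) (hg : ContDiff ℝ 2 g)
    (hf0 : f 0 = 0) (hg0 : g 0 = 0)
    (hfmono : StrictMonoOn f (Set.Ici 0)) (hgmono : StrictMonoOn g (Set.Ici 0))
    (hfg : StrictMonoOn (fun x => f x - g x) (Set.Ici 0))
    (hfg' : MonotoneOn (fun x => deriv f x - deriv g x) (Set.Ici 0))
    (c : ℝ) (hc : 0 < c) :
    deriv (deriv (fun x => x * (f x + g (c - x)) + (c - x) * (f (c - x) - g x))) (c / 2) =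
        4 * deriv f (c / 2) + c * deriv (deriv f) (c / 2) ∧
      (g (c / 2) = c / 2 * deriv g (c / 2) →
        0 < 4 * deriv f (c / 2) + c * deriv (deriv f) (c / 2) →
        ∃ ε > 0, ∀ x : ℝ, |x - c / 2| < ε → x ≠ c / 2 →
          (fun x => x * (f x + g (c - x)) + (c - x) * (f (c - x) - g x)) (c / 2) <
            (fun x => x * (f x + g (c - x)) + (c - x) * (f (c - x) - g x)) x) := by
  have hf2 : ContDiff ℝ (1 + 1 : ℕ) f := by exact_mod_cast hf
  have hg2 : ContDiff ℝ (1 + 1 : ℕ) g := by exact_mod_cast hg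
  have hfd : Differentiable ℝ f := hf.differentiable two_ne_zero
  have hgd : Differentiable ℝ g := hg.differentiable two_ne_zero
  have hf1 : ContDiff ℝ 1 (deriv f) := ((contDiff_succ_iff_deriv).mp hf2).2.2
  have hg1 : ContDiff ℝ 1 (deriv g) := ((contDiff_succ_iff_deriv).mp hg2).2.2
  have hfd' : Differentiable ℝ (deriv f) := hf1.differentiable one_ne_zero
  have hgd' : Differentiable ℝ (deriv g) := hg1.differentiable one_ne_zero
  have hfc'' : Continuous (deriv (deriv f)) := (contDiff_one_iff_deriv.mp hf1).2
  have hgc'' : Continuous (deriv (deriv g)) := (contDiff_one_iff_deriv.mp hg1).2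
  set h : ℝ → ℝ := fun x => x * (f x + g (c - x)) + (c - x) * (f (c - x) - g x) with hh
  set h1 : ℝ → ℝ := fun x => f x + g (c - x) + x * (deriv f x - deriv g (c - x))
      - (f (c - x) - g x) + (c - x) * (-(deriv f (c - x)) - deriv g x) with hh1
  set h2 : ℝ → ℝ := fun x => 2 * (deriv f x - deriv g (c - x))
      + x * (deriv (deriv f) x + deriv (deriv g) (c - x))
      + 2 * (deriv f (c - x) + deriv g x)
      + (c - x) * (deriv (deriv f) (c - x) - deriv (deriv g) x) with hh2
  have hsub : ∀ x : ℝ, HasDerivAt (fun y => c - y) (-1) x := fun x =>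
    (hasDerivAt_id x).const_sub c
  have Hd : ∀ x, HasDerivAt h (h1 x) x := by
    intro x
    have B : HasDerivAt (fun y => g (c - y)) (deriv g (c - x) * -1) x :=
      ((hgd (c - x)).hasDerivAt).comp x (hsub x)
    have Bf : HasDerivAt (fun y => f (c - y)) (deriv f (c - x) * -1) x :=
      ((hfd (c - x)).hasDerivAt).comp x (hsub x)
    have H1 : HasDerivAt (fun y => y * (f y + g (c - y)))
        (1 * (f x + g (c - x)) + x * (deriv f x + deriv g (c - x) * -1)) x :=
      (hasDerivAt_id x).mul ((hfd x).hasDerivAt.add B)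
    have H2 : HasDerivAt (fun y => (c - y) * (f (c - y) - g y))
        (-1 * (f (c - x) - g x) + (c - x) * (deriv f (c - x) * -1 - deriv g x)) x :=
      (hsub x).mul (Bf.sub (hgd x).hasDerivAt)
    have := H1.add H2
    exact this.congr_deriv (by simp only [hh1]; ring)
  have Hd2 : ∀ x, HasDerivAt h1 (h2 x) x := by
    intro x
    have B' : HasDerivAt (fun y => deriv g (c - y)) (deriv (deriv g) (c - x) * -1) x :=
      ((hgd' (c - x)).hasDerivAt).comp x (hsub x)
    have Bf' : HasDerivAt (fun y => deriv f (c - y)) (deriv (deriv f) (c - x) * -1) x :=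
      ((hfd' (c - x)).hasDerivAt).comp x (hsub x)
    have B : HasDerivAt (fun y => g (c - y)) (deriv g (c - x) * -1) x :=
      ((hgd (c - x)).hasDerivAt).comp x (hsub x)
    have Bf : HasDerivAt (fun y => f (c - y)) (deriv f (c - x) * -1) x :=
      ((hfd (c - x)).hasDerivAt).comp x (hsub x)
    have H3 : HasDerivAt (fun y => y * (deriv f y - deriv g (c - y)))
        (1 * (deriv f x - deriv g (c - x)) +
          x * (deriv (deriv f) x - deriv (deriv g) (c - x) * -1)) x :=
      (hasDerivAt_id x).mul ((hfd' x).hasDerivAt.sub B')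
    have H5 : HasDerivAt (fun y => (c - y) * (-(deriv f (c - y)) - deriv g y))
        (-1 * (-(deriv f (c - x)) - deriv g x) +
          (c - x) * (-(deriv (deriv f) (c - x) * -1) - deriv (deriv g) x)) x :=
      (hsub x).mul (Bf'.neg.sub (hgd' x).hasDerivAt)
    have := ((((hfd x).hasDerivAt.add B).add H3).sub (Bf.sub (hgd x).hasDerivAt)).add H5
    exact this.congr_deriv (by simp only [hh2]; ring)
  have hdh : deriv h = h1 := funext fun x => (Hd x).deriv
  have hddh : deriv (deriv h) = h2 := by
    rw [hdh]; exact funext fun x => (Hd2 x).deriv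
  have hc2 : c - c / 2 = c / 2 := by ring
  have heq : deriv (deriv h) (c / 2) = 4 * deriv f (c / 2) + c * deriv (deriv f) (c / 2) := by
    rw [hddh]; simp only [hh2, hc2]; ring
  refine ⟨heq, fun hgsym hpos => ?_⟩
  -- deriv h (c/2) = 0
  have hdh0 : deriv h (c / 2) = 0 := by
    rw [hdh]; simp only [hh1, hc2]
    rw [hgsym]; ring
  -- h2 is continuous
  have hfc' : Continuous (deriv f) := hf1.continuous
  have hgc' : Continuous (deriv g) := hg1.continuous
  have hcsub : Continuous (fun y : ℝ => c - y) := continuous_const.sub continuous_id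
  have h2cont : Continuous h2 := by
    simp only [hh2]
    fun_prop
  have hpos2 : 0 < h2 (c / 2) := by
    have : h2 (c / 2) = 4 * deriv f (c / 2) + c * deriv (deriv f) (c / 2) := by
      simp only [hh2, hc2]; ring
    rwa [this]
  -- h2 positive near c/2
  have hopen : IsOpen {y : ℝ | 0 < h2 y} := isOpen_lt continuous_const h2cont
  obtain ⟨ε, hε, hball⟩ := Metric.mem_nhds_iff.mp (hopen.mem_nhds hpos2)
  have h1cont : Continuous h1 := by
    simp only [hh1]
    fun_prop
  have hInt : Set.Ioo (c / 2 - ε) (c / 2 + ε) ⊆ Metric.ball (c / 2) ε := by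
    intro y hy
    rw [Metric.mem_ball, Real.dist_eq, abs_lt]
    constructor <;> [linarith [hy.1]; linarith [hy.2]]
  -- deriv h strictly mono on the interval
  have hmono : StrictMonoOn (deriv h) (Set.Ioo (c / 2 - ε) (c / 2 + ε)) := by
    apply strictMonoOn_of_deriv_pos (convex_Ioo _ _)
    · rw [hdh]; exact h1cont.continuousOn
    · intro y hy
      rw [interior_Ioo] at hy
      rw [hddh]
      exact hball (hInt hy)
  refine ⟨ε, hε, fun x hx hxne => ?_⟩
  have hxmem : x ∈ Set.Ioo (c / 2 - ε) (c / 2 + ε) := by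
    rw [abs_lt] at hx
    constructor <;> [linarith [hx.1]; linarith [hx.2]]
  have hcmem : c / 2 ∈ Set.Ioo (c / 2 - ε) (c / 2 + ε) := by
    constructor <;> linarith
  rcases lt_or_gt_of_ne hxne with hlt | hgt
  · -- x < c/2 : h strictly anti on [x, c/2]
    have hanti : StrictAntiOn h (Set.Icc x (c / 2)) := by
      apply strictAntiOn_of_deriv_neg (convex_Icc _ _)
      · exact fun y _ => (Hd y).continuousAt.continuousWithinAt
      · intro y hy
        rw [interior_Icc] at hy
        have hymem : y ∈ Set.Ioo (c / 2 - ε) (c / 2 + ε) :=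
          ⟨by linarith [hxmem.1, hy.1], by linarith [hy.2, hcmem.2]⟩
        have := hmono hymem hcmem hy.2
        rw [hdh0] at this
        exact this
    have := hanti (Set.left_mem_Icc.mpr hlt.le) (Set.right_mem_Icc.mpr hlt.le) hlt
    simpa using this
  · -- c/2 < x : h strictly mono on [c/2, x]
    have hmono2 : StrictMonoOn h (Set.Icc (c / 2) x) := by
      apply strictMonoOn_of_deriv_pos (convex_Icc _ _)
      · exact fun y _ => (Hd y).continuousAt.continuousWithinAt
      · intro y hy
        rw [interior_Icc] at hy
        have hymem : y ∈ Set.Ioo (c / 2 - ε) (c / 2 + ε) :=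
          ⟨by linarith [hcmem.1, hy.1], by linarith [hy.2, hxmem.2]⟩
        have := hmono hcmem hymem hy.1
        rw [hdh0] at this
        exact this
    have := hmono2 (Set.left_mem_Icc.mpr hgt.le) (Set.right_mem_Icc.mpr hgt.le) hgt
    simpa using this
end

section
/- For every real number c > 0, the second derivative at x = c/2 of the section h(x) = x(f(x) + g(c − x)) + (c − x)(f(c − x) + g(x)) of the positive–positive interaction surface by the plane y = c − x equals h''(c/2) = 4(f'(c/2) − g'(c/2)) + c(f''(c/2) + g''(c/2)); consequently, if 2(f'(c/2) − g'(c/2)) + (c/2)(f''(c/2) + g''(c/2)) > 0, then x = c/2 is a strict local minimum of this section, so that the bisector y = x is the only possible trajectory of minimum entropy of the positive–positive interaction. -/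
theorem pp_transversal_second_deriv (f g : ℝ → ℝ)
    (hf : ContDiff ℝ 2 f) (hg : ContDiff ℝ 2 g)
    (hf0 : f 0 = 0) (hg0 : g 0 = 0)
    (hfmono : StrictMonoOn f (Set.Ici 0)) (hgmono : StrictMonoOn g (Set.Ici 0))
    (hfg : StrictMonoOn (fun x => f x - g x) (Set.Ici 0))
    (hfg' : MonotoneOn (fun x => deriv f x - deriv g x) (Set.Ici 0))
    (c : ℝ) (hc : 0 < c) :
    deriv (deriv (fun x => x * (f x + g (c - x)) + (c - x) * (f (c - x) + g x))) (c / 2) =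
        4 * (deriv f (c / 2) - deriv g (c / 2)) +
          c * (deriv (deriv f) (c / 2) + deriv (deriv g) (c / 2)) ∧
      (0 < 2 * (deriv f (c / 2) - deriv g (c / 2)) +
          c / 2 * (deriv (deriv f) (c / 2) + deriv (deriv g) (c / 2)) →
        ∃ ε > 0, ∀ x : ℝ, |x - c / 2| < ε → x ≠ c / 2 →
          (fun x => x * (f x + g (c - x)) + (c - x) * (f (c - x) + g x)) (c / 2) <
            (fun x => x * (f x + g (c - x)) + (c - x) * (f (c - x) + g x)) x) := by
  have hf2 : ContDiff ℝ (1 + 1 : ℕ) f := by exact_mod_cast hf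
  have hg2 : ContDiff ℝ (1 + 1 : ℕ) g := by exact_mod_cast hg
  have hfd : Differentiable ℝ f := hf2.differentiable (by norm_num)
  have hgd : Differentiable ℝ g := hg2.differentiable (by norm_num)
  have hf'c1 : ContDiff ℝ 1 (deriv f) := (contDiff_succ_iff_deriv.mp hf2).2.2
  have hg'c1 : ContDiff ℝ 1 (deriv g) := (contDiff_succ_iff_deriv.mp hg2).2.2
  have hf'd : Differentiable ℝ (deriv f) := hf'c1.differentiable one_ne_zero
  have hg'd : Differentiable ℝ (deriv g) := hg'c1.differentiable one_ne_zero
  set h : ℝ → ℝ := fun x => x * (f x + g (c - x)) + (c - x) * (f (c - x) + g x) with hhdef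
  set h1 : ℝ → ℝ := fun x =>
      (f x + g (c - x)) + x * (deriv f x - deriv g (c - x)) +
        (-(f (c - x) + g x) + (c - x) * (deriv g x - deriv f (c - x))) with h1def
  set h2 : ℝ → ℝ := fun x =>
      2 * (deriv f x - deriv g (c - x)) + 2 * (deriv f (c - x) - deriv g x) +
        x * (deriv (deriv f) x + deriv (deriv g) (c - x)) +
        (c - x) * (deriv (deriv f) (c - x) + deriv (deriv g) x) with h2def
  have hd1 : ∀ x, HasDerivAt h (h1 x) x := by
    intro x
    have Hg : HasDerivAt (fun y => g (c - y)) (-(deriv g (c - x))) x :=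
      ((hgd (c - x)).hasDerivAt).comp_const_sub c x
    have Hf : HasDerivAt (fun y => f (c - y)) (-(deriv f (c - x))) x :=
      ((hfd (c - x)).hasDerivAt).comp_const_sub c x
    have A : HasDerivAt (fun y => y * (f y + g (c - y)))
        (1 * (f x + g (c - x)) + x * (deriv f x + -(deriv g (c - x)))) x :=
      (hasDerivAt_id x).mul ((hfd x).hasDerivAt.add Hg)
    have B : HasDerivAt (fun y => (c - y) * (f (c - y) + g y))
        ((0 - 1) * (f (c - x) + g x) + (c - x) * (-(deriv f (c - x)) + deriv g x)) x :=
      ((hasDerivAt_const x c).sub (hasDerivAt_id x)).mul (Hf.add (hgd x).hasDerivAt)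
    have := A.add B
    exact this.congr_deriv (by simp only [h1def]; ring)
  have hderiv : deriv h = h1 := funext fun x => (hd1 x).deriv
  have hd2 : ∀ x, HasDerivAt h1 (h2 x) x := by
    intro x
    have Hg : HasDerivAt (fun y => g (c - y)) (-(deriv g (c - x))) x :=
      ((hgd (c - x)).hasDerivAt).comp_const_sub c x
    have Hf : HasDerivAt (fun y => f (c - y)) (-(deriv f (c - x))) x :=
      ((hfd (c - x)).hasDerivAt).comp_const_sub c x
    have Hg' : HasDerivAt (fun y => deriv g (c - y)) (-(deriv (deriv g) (c - x))) x :=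
      ((hg'd (c - x)).hasDerivAt).comp_const_sub c x
    have Hf' : HasDerivAt (fun y => deriv f (c - y)) (-(deriv (deriv f) (c - x))) x :=
      ((hf'd (c - x)).hasDerivAt).comp_const_sub c x
    have A : HasDerivAt (fun y => f y + g (c - y)) (deriv f x + -(deriv g (c - x))) x :=
      (hfd x).hasDerivAt.add Hg
    have B : HasDerivAt (fun y => y * (deriv f y - deriv g (c - y)))
        (1 * (deriv f x - deriv g (c - x)) +
          x * (deriv (deriv f) x - -(deriv (deriv g) (c - x)))) x :=
      (hasDerivAt_id x).mul ((hf'd x).hasDerivAt.sub Hg')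
    have C : HasDerivAt (fun y => -(f (c - y) + g y)) (-(-(deriv f (c - x)) + deriv g x)) x :=
      (Hf.add (hgd x).hasDerivAt).neg
    have D : HasDerivAt (fun y => (c - y) * (deriv g y - deriv f (c - y)))
        ((0 - 1) * (deriv g x - deriv f (c - x)) +
          (c - x) * (deriv (deriv g) x - -(deriv (deriv f) (c - x)))) x :=
      ((hasDerivAt_const x c).sub (hasDerivAt_id x)).mul ((hg'd x).hasDerivAt.sub Hf')
    have := (A.add B).add (C.add D)
    exact this.congr_deriv (by simp only [h2def]; ring)
  have hderiv2 : deriv (deriv h) = h2 := by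
    rw [hderiv]; exact funext fun x => (hd2 x).deriv
  have hc2 : c - c / 2 = c / 2 := by ring
  have hval : h2 (c / 2) = 4 * (deriv f (c / 2) - deriv g (c / 2)) +
      c * (deriv (deriv f) (c / 2) + deriv (deriv g) (c / 2)) := by
    simp only [h2def, hc2]; ring
  constructor
  · rw [hderiv2, hval]
  · intro hpos
    have hpos2 : 0 < h2 (c / 2) := by rw [hval]; linarith
    have conth2 : Continuous h2 := by
      have c1 : Continuous (deriv f) := hf'c1.continuous
      have c2 : Continuous (deriv g) := hg'c1.continuous
      have c3 : Continuous (deriv (deriv f)) := (contDiff_one_iff_deriv.mp hf'c1).2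
      have c4 : Continuous (deriv (deriv g)) := (contDiff_one_iff_deriv.mp hg'c1).2
      have csub : Continuous (fun x : ℝ => c - x) := continuous_const.sub continuous_id
      rw [h2def]
      fun_prop
    have hopen : IsOpen {x : ℝ | 0 < h2 x} := isOpen_lt continuous_const conth2
    obtain ⟨ε, hε, hball⟩ := Metric.isOpen_iff.mp hopen (c / 2) hpos2
    refine ⟨ε, hε, ?_⟩
    intro x hx hne
    have h1mid : h1 (c / 2) = 0 := by simp only [h1def, hc2]; ring
    have h1cont : Continuous h1 := Differentiable.continuous (fun y => (hd2 y).differentiableAt)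
    have hcont : Continuous h := Differentiable.continuous (fun y => (hd1 y).differentiableAt)
    have hmono1 : StrictMonoOn h1 (Metric.ball (c / 2) ε) := by
      apply strictMonoOn_of_deriv_pos (convex_ball _ _) h1cont.continuousOn
      intro y hy
      rw [Metric.isOpen_ball.interior_eq] at hy
      rw [(hd2 y).deriv]
      exact hball hy
    rw [abs_lt] at hx
    have hmidball : c / 2 ∈ Metric.ball (c / 2) ε := Metric.mem_ball_self hε
    show h (c / 2) < h x
    rcases hne.lt_or_gt with hlt | hlt
    · -- x < c/2
      have hanti : StrictAntiOn h (Set.Icc x (c / 2)) := by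
        apply strictAntiOn_of_deriv_neg (convex_Icc _ _) hcont.continuousOn
        intro y hy
        rw [interior_Icc] at hy
        rw [hderiv]
        have hyb : y ∈ Metric.ball (c / 2) ε := by
          rw [Metric.mem_ball, Real.dist_eq, abs_lt]
          constructor <;> [linarith [hy.1]; linarith [hy.2]]
        have := hmono1 hyb hmidball hy.2
        rw [h1mid] at this
        exact this
      exact hanti ⟨le_refl x, hlt.le⟩ ⟨hlt.le, le_refl _⟩ hlt
    · -- c/2 < x
      have hmono : StrictMonoOn h (Set.Icc (c / 2) x) := by
        apply strictMonoOn_of_deriv_pos (convex_Icc _ _) hcont.continuousOn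
        intro y hy
        rw [interior_Icc] at hy
        rw [hderiv]
        have hyb : y ∈ Metric.ball (c / 2) ε := by
          rw [Metric.mem_ball, Real.dist_eq, abs_lt]
          constructor <;> [linarith [hy.1]; linarith [hy.2]]
        have := hmono1 hmidball hyb hy.1
        rw [h1mid] at this
        exact this
      exact hmono ⟨le_refl _, hlt.le⟩ ⟨hlt.le, le_refl x⟩ hlt
end
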